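/- The optimized unraveling U_opt is sound for every U_opt-RLNE eDCTRS that is non-LV or non-RV: if R is an eDCTRS over a signature F that is ultra-right-linear and ultra-non-erasing w.r.t. U_opt and is non-LV or non-RV, then for all terms s, t ∈ T(F,V), s →*_{U_opt(R)} t implies s →*_R t. -/

import Mathlib

set_option maxHeartbeats 1000000

universe u

/-! ## Terms -/

inductive Term (α : Type u) : Type u where
  | var : ℕ → Term α
  | app : α → List (Term α) → Term α

namespace Term

variable {α : Type u}

/-- The list of variable occurrences of a term (left-to-right). -/
def varList : Term α → List ℕ
  | var x => [x]
  | app _ ts => ts.attach.foldr (fun t acc => varList t.1 ++ acc) []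
decreasing_by
  simp only [Term.app.sizeOf_spec]
  have := List.sizeOf_lt_of_mem t.2
  omega

/-- The list of (function symbol, number of arguments) occurrences of a term. -/
def apps : Term α → List (α × ℕ)
  | var _ => []
  | app f ts => (f, ts.length) :: ts.attach.foldr (fun t acc => apps t.1 ++ acc) []
decreasing_by
  simp only [Term.app.sizeOf_spec]
  have := List.sizeOf_lt_of_mem t.2
  omega

/-- `Var(t)`: the set of variables of a term. -/
def varFinset (t : Term α) : Finset ℕ := t.varList.toFinset

/-- All function symbols of the term belong to the signature `F`. -/
def overSig (F : Set α) (t : Term α) : Prop := ∀ p ∈ t.apps, p.1 ∈ F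

/-- `t ∈ T(F,V)`: all function symbols belong to `F` and are applied
according to their arities. -/
def inT (F : Set α) (ar : α → ℕ) (t : Term α) : Prop :=
  ∀ p ∈ t.apps, p.1 ∈ F ∧ ar p.1 = p.2

/-- A term is linear if no variable occurs twice in it. -/
def Linear (t : Term α) : Prop := t.varList.Nodup

/-- A term is ground if it contains no variable. -/
def Ground (t : Term α) : Prop := t.varList = []

/-- Applying a substitution to a term. -/
def subst (σ : ℕ → Term α) : Term α → Term α
  | var x => σ x
  | app f ts => app f (ts.attach.map (fun t => subst σ t.1))
decreasing_by
  simp only [Term.app.sizeOf_spec]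
  have := List.sizeOf_lt_of_mem t.2
  omega

def isVar : Term α → Prop
  | var _ => True
  | app _ _ => False

def root? : Term α → Option α
  | var _ => none
  | app f _ => some f

def args : Term α → List (Term α)
  | var _ => []
  | app _ ts => ts

end Term

def junkPair {α : Type u} : Term α × Term α := (Term.var 0, Term.var 0)

/-! ## Conditional rewrite rules -/

/-- An extended (oriented) conditional rewrite rule `l → r ⇐ s₁ ↠ t₁; …; s_k ↠ t_k`,
where `conds` is the list of pairs `(sᵢ, tᵢ)`. -/
structure ERule (α : Type u) : Type u where
  lhs : Term α
  rhs : Term α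
  conds : List (Term α × Term α)

namespace ERule

variable {α : Type u}

def nonLV (ρ : ERule α) : Prop := ¬ ρ.lhs.isVar
def nonRV (ρ : ERule α) : Prop := ¬ ρ.rhs.isVar

/-- `X_{j+1} = Var(l, t_1, …, t_j)` (0-based index `j`). -/
def Xset (ρ : ERule α) (j : ℕ) : Finset ℕ :=
  ρ.lhs.varFinset ∪ ((ρ.conds.take j).map (fun c => c.2.varFinset)).foldr (· ∪ ·) ∅

/-- `Y_{j+1} = Var(r, t_{j+1}, s_{j+2}, t_{j+2}, …, s_k, t_k)` (0-based index `j`). -/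
def Yset (ρ : ERule α) (j : ℕ) : Finset ℕ :=
  ρ.rhs.varFinset ∪ (ρ.conds.getD j junkPair).2.varFinset ∪
    ((ρ.conds.drop (j+1)).map (fun c => c.1.varFinset ∪ c.2.varFinset)).foldr (· ∪ ·) ∅

/-- `Z_i = X_i ∩ Y_i`. -/
def Zset (ρ : ERule α) (j : ℕ) : Finset ℕ := ρ.Xset j ∩ ρ.Yset j

/-- Determinism: `Var(sᵢ) ⊆ Var(l, t₁, …, t_{i-1})`. -/
def Det (ρ : ERule α) : Prop :=
  ∀ j < ρ.conds.length, (ρ.conds.getD j junkPair).1.varFinset ⊆ ρ.Xset j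

/-- Type 3: `Var(r) ⊆ Var(l, s₁, t₁, …, s_k, t_k)`. -/
def Type3 (ρ : ERule α) : Prop :=
  ρ.rhs.varFinset ⊆
    ρ.lhs.varFinset ∪ ((ρ.conds.map (fun c => c.1.varFinset ∪ c.2.varFinset)).foldr (· ∪ ·) ∅)

/-- Left-linearity of a rule. -/
def LL (ρ : ERule α) : Prop := ρ.lhs.Linear
/-- Right-linearity of a rule. -/
def RL (ρ : ERule α) : Prop := ρ.rhs.Linear
/-- Non-erasingness of a rule: `Var(l) ⊆ Var(r)`. -/
def NE (ρ : ERule α) : Prop := ρ.lhs.varFinset ⊆ ρ.rhs.varFinset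

/-- `EVar(l → r) = Var(r) \\ Var(l)`, the extra variables of a rule. -/
def extraVars (ρ : ERule α) : Finset ℕ := ρ.rhs.varFinset \ ρ.lhs.varFinset

/-- The inverted rule `(l → r ⇐ s₁ ↠ t₁; …; s_k ↠ t_k)⁻¹ = r → l ⇐ t_k ↠ s_k; …; t₁ ↠ s₁`. -/
def inv (ρ : ERule α) : ERule α :=
  ⟨ρ.rhs, ρ.lhs, (ρ.conds.map (fun c => (c.2, c.1))).reverse⟩

def allVarFinset (ρ : ERule α) : Finset ℕ :=
  ρ.lhs.varFinset ∪ ρ.rhs.varFinset ∪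
    ((ρ.conds.map (fun c => c.1.varFinset ∪ c.2.varFinset)).foldr (· ∪ ·) ∅)

/-- A number strictly larger than every variable of the rule; used to pick fresh variables. -/
def freshBase (ρ : ERule α) : ℕ := ρ.allVarFinset.sup id + 1

/-- All terms of the rule use only symbols of `F`. -/
def overSig (F : Set α) (ρ : ERule α) : Prop :=
  ρ.lhs.overSig F ∧ ρ.rhs.overSig F ∧ ∀ c ∈ ρ.conds, c.1.overSig F ∧ c.2.overSig F

/-- All terms of the rule are in `T(F,V)` (symbols of `F`, arity-correct). -/
def inT (F : Set α) (ar : α → ℕ) (ρ : ERule α) : Prop :=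
  ρ.lhs.inT F ar ∧ ρ.rhs.inT F ar ∧ ∀ c ∈ ρ.conds, c.1.inT F ar ∧ c.2.inT F ar

end ERule

/-! ## Reduction relations -/

/-- One-hole contexts. -/
inductive Ctx (α : Type u) : Type u where
  | hole : Ctx α
  | app : α → List (Term α) → Ctx α → List (Term α) → Ctx α

def Ctx.plug {α : Type u} : Ctx α → Term α → Term α
  | .hole, t => t
  | .app f pre c post, t => .app f (pre ++ c.plug t :: post)

/-- The approximations `→_{(n),R}` of the reduction relation of an oriented eCTRS. -/
def RedN {α : Type u} (R : Set (ERule α)) : ℕ → Term α → Term α → Prop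
  | 0 => fun _ _ => False
  | n + 1 => fun s t =>
      RedN R n s t ∨
      ∃ ρ ∈ R, ∃ C : Ctx α, ∃ σ : ℕ → Term α,
        s = C.plug (ρ.lhs.subst σ) ∧ t = C.plug (ρ.rhs.subst σ) ∧
        ∀ c ∈ ρ.conds, Relation.ReflTransGen (RedN R n) (c.1.subst σ) (c.2.subst σ)

/-- The reduction relation `→_R` of an oriented eCTRS. -/
def Red {α : Type u} (R : Set (ERule α)) (s t : Term α) : Prop := ∃ n, RedN R n s t

/-- `→*_R`. -/
def RedStar {α : Type u} (R : Set (ERule α)) : Term α → Term α → Prop :=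
  Relation.ReflTransGen (Red R)

/-- The approximations of the reduction relation of a join CTRS
(conditions interpreted as joinability). -/
def JRedN {α : Type u} (R : Set (ERule α)) : ℕ → Term α → Term α → Prop
  | 0 => fun _ _ => False
  | n + 1 => fun s t =>
      JRedN R n s t ∨
      ∃ ρ ∈ R, ∃ C : Ctx α, ∃ σ : ℕ → Term α,
        s = C.plug (ρ.lhs.subst σ) ∧ t = C.plug (ρ.rhs.subst σ) ∧
        ∀ c ∈ ρ.conds, ∃ w, Relation.ReflTransGen (JRedN R n) (c.1.subst σ) w ∧
          Relation.ReflTransGen (JRedN R n) (c.2.subst σ) w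

/-- The reduction relation of a join CTRS. -/
def JRed {α : Type u} (R : Set (ERule α)) (s t : Term α) : Prop := ∃ n, JRedN R n s t

def JRedStar {α : Type u} (R : Set (ERule α)) : Term α → Term α → Prop :=
  Relation.ReflTransGen (JRed R)

/-- The underlying unconditional system `R_u`. -/
def Ru {α : Type u} (R : Set (ERule α)) : Set (ERule α) :=
  (fun ρ : ERule α => ⟨ρ.lhs, ρ.rhs, []⟩) '' R

/-- Normal form w.r.t. a system. -/
def IsNF {α : Type u} (R : Set (ERule α)) (t : Term α) : Prop := ∀ w, ¬ Red R t w

/-! ## Unravelings for deterministic CTRSs -/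

/-- The fixed-order sequence of a finite set of variables. -/
def seqOf (s : Finset ℕ) : List ℕ := s.sort (· ≤ ·)

/-- `U(t, x⃗)`: a U symbol applied to a term followed by a sequence of variables. -/
def mkU {α : Type u} (f : α) (t : Term α) (xs : List ℕ) : Term α :=
  .app f (t :: xs.map Term.var)

/-- Generic sequential unraveling of a single deterministic rule, where `carry j` is
the variable sequence carried by the `j`-th U symbol. -/
def unravelWith {α : Type u} (carry : ℕ → List ℕ) (u : ℕ → α) (ρ : ERule α) :
    List (ERule α) :=
  (List.range (ρ.conds.length + 1)).map (fun j =>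
    ⟨ if j = 0 then ρ.lhs else mkU (u (j-1)) (ρ.conds.getD (j-1) junkPair).2 (carry (j-1)),
      if j < ρ.conds.length then mkU (u j) (ρ.conds.getD j junkPair).1 (carry j) else ρ.rhs,
      [] ⟩)

/-- Ohlebusch's unraveling `U` of a single rule (carrying `X⃗ᵢ`). -/
def unravelU {α : Type u} (u : ℕ → α) (ρ : ERule α) : List (ERule α) :=
  unravelWith (fun j => seqOf (ρ.Xset j)) u ρ

/-- The optimized unraveling `U_opt` of a single rule (carrying `Z⃗ᵢ`). -/
def unravelOpt {α : Type u} (u : ℕ → α) (ρ : ERule α) : List (ERule α) :=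
  unravelWith (fun j => seqOf (ρ.Zset j)) u ρ

/-- `U(R)`. -/
def USys {α : Type u} (u : ERule α → ℕ → α) (R : Set (ERule α)) : Set (ERule α) :=
  { q | ∃ ρ ∈ R, q ∈ unravelU (u ρ) ρ }

/-- `U_opt(R)`. -/
def UoptSys {α : Type u} (u : ERule α → ℕ → α) (R : Set (ERule α)) : Set (ERule α) :=
  { q | ∃ ρ ∈ R, q ∈ unravelOpt (u ρ) ρ }

/-- The U symbols introduced for the rules of `R`. -/
def USymbols {α : Type u} (u : ERule α → ℕ → α) (R : Set (ERule α)) : Set α :=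
  { a | ∃ ρ ∈ R, ∃ i < ρ.conds.length, a = u ρ i }

/-- Freshness of the U symbols: they do not occur in `F` and are pairwise distinct. -/
def UFresh {α : Type u} (F : Set α) (u : ERule α → ℕ → α) (R : Set (ERule α)) : Prop :=
  (∀ ρ ∈ R, ∀ i < ρ.conds.length, u ρ i ∉ F) ∧
  (∀ ρ ∈ R, ∀ ρ' ∈ R, ∀ i < ρ.conds.length, ∀ j < ρ'.conds.length,
      u ρ i = u ρ' j → ρ = ρ' ∧ i = j)

/-! ## Positions, parallel reduction, EV-safe reduction -/

abbrev Pos := List ℕ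

/-- Subterm at a position. -/
def Term.sub? {α : Type u} : Pos → Term α → Option (Term α)
  | [], t => some t
  | _ :: _, .var _ => none
  | i :: p, .app _ ts => (ts[i]?).bind (Term.sub? p)

/-- Replacing the subterm at a position by `w`. -/
def Term.replaceAt {α : Type u} (w : Term α) : Pos → Term α → Term α
  | [], _ => w
  | _ :: _, .var x => .var x
  | i :: p, .app f ts =>
      .app f (ts.mapIdx (fun j s => if j = i then Term.replaceAt w p s else s))

/-- `Pos_F(t)`: non-variable positions of `t`. -/
def PosF {α : Type u} (t : Term α) : Set Pos :=
  { p | ∃ f ts, Term.sub? p t = some (Term.app f ts) }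

/-- `Pos_V(t)`: variable positions of `t`. -/
def PosV {α : Type u} (t : Term α) : Set Pos :=
  { p | ∃ x, Term.sub? p t = some (Term.var x) }

/-- One rewrite step of an eTRS at position `p`. -/
def RedAt {α : Type u} (R : Set (ERule α)) (p : Pos) (s t : Term α) : Prop :=
  ∃ ρ ∈ R, ρ.conds = [] ∧ ∃ σ : ℕ → Term α,
    Term.sub? p s = some (ρ.lhs.subst σ) ∧ t = Term.replaceAt (ρ.rhs.subst σ) p s

/-- Two positions are parallel. -/
def ParallelPos (p q : Pos) : Prop := ¬ p <+: q ∧ ¬ q <+: p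

/-- A sequence of single steps at the listed positions. -/
inductive RedSeqAt {α : Type u} (R : Set (ERule α)) : List Pos → Term α → Term α → Prop
  | nil (t : Term α) : RedSeqAt R [] t t
  | cons {ps s s' t} (p : Pos) : RedAt R p s s' → RedSeqAt R ps s' t →
      RedSeqAt R (p :: ps) s t

/-- One parallel rewrite step contracting the (pairwise parallel) positions in `P`. -/
def ParStep {α : Type u} (R : Set (ERule α)) (P : List Pos) (s t : Term α) : Prop :=
  P.Pairwise ParallelPos ∧ RedSeqAt R P s t

/-- The parallel reduction `⇉_R`. -/
def ParRed {α : Type u} (R : Set (ERule α)) (s t : Term α) : Prop :=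
  ∃ P, ParStep R P s t

/-- Parallel reduction where every contracted position is at or below a position of `Q`. -/
def ParRedBelow {α : Type u} (R : Set (ERule α)) (Q : Set Pos) (s t : Term α) : Prop :=
  ∃ P, ParStep R P s t ∧ ∀ p ∈ P, ∃ q ∈ Q, q <+: p

/-- `n`-fold composition of a relation. -/
def NFold {β : Type*} (r : β → β → Prop) : ℕ → β → β → Prop
  | 0 => Eq
  | n + 1 => fun a c => ∃ b, r a b ∧ NFold r n b c

/-- The update of the set of basic positions w.r.t. extra variables after a rewrite step
at position `p` with rule `l → r`. -/
def nextB {α : Type u} (B : Set Pos) (p : Pos) (l r : Term α) : Set Pos :=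
  { q | q ∈ B ∧ ¬ p <+: q }
  ∪ { q | ∃ q' ∈ PosF r, q = p ++ q' }
  ∪ { q | ∃ pv p' q', pv ∈ PosV l ∧ Term.sub? pv l = Term.sub? p' r ∧
        (p ++ pv ++ q') ∈ B ∧ q = p ++ p' ++ q' }

/-- Reduction sequences of an eTRS based on a set `B` of positions w.r.t. extra
variables, where additionally every term substituted for an extra variable of the
applied rule satisfies `T` (EV-instantiation on `T`). -/
inductive EVSeq {α : Type u} (R : Set (ERule α)) (T : Term α → Prop) :
    Set Pos → Term α → Term α → Prop
  | refl (B : Set Pos) (t : Term α) : EVSeq R T B t t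
  | step {B : Set Pos} {s s' t : Term α} (p : Pos) (ρ : ERule α) (σ : ℕ → Term α) :
      ρ ∈ R → ρ.conds = [] →
      Term.sub? p s = some (ρ.lhs.subst σ) →
      s' = Term.replaceAt (ρ.rhs.subst σ) p s →
      p ∈ B →
      (∀ x ∈ ρ.extraVars, T (σ x)) →
      EVSeq R T (nextB B p ρ.lhs ρ.rhs) s' t →
      EVSeq R T B s t

/-- An EV-safe reduction sequence `s ↪*_R t`, EV-instantiated on `T`. -/
def EVSafeI {α : Type u} (R : Set (ERule α)) (T : Term α → Prop) (s t : Term α) : Prop :=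
  EVSeq R T (PosF s) s t

/-- An EV-safe reduction sequence `s ↪*_R t`. -/
def EVSafe {α : Type u} (R : Set (ERule α)) (s t : Term α) : Prop :=
  EVSeq R (fun _ => True) (PosF s) s t

/-! ## Tree homomorphisms -/

/-- Applying the tree homomorphism determined by `h` to a term:
`φ(f(t₁, …, t_n)) = h(f){xᵢ ↦ φ(tᵢ)}` (the formal variable `xᵢ` is the variable `i - 1`). -/
def applyHom {α : Type u} (h : α → Term α) : Term α → Term α
  | .var x => .var x
  | .app f ts =>
      Term.subst (fun i => (ts.attach.map (fun s => applyHom h s.1)).getD i (Term.var i)) (h f)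
decreasing_by
  simp only [Term.app.sizeOf_spec]
  have := List.sizeOf_lt_of_mem s.2
  omega

/-- The image of a rule under a tree homomorphism. -/
def homRule {α : Type u} (h : α → Term α) (ρ : ERule α) : ERule α :=
  ⟨applyHom h ρ.lhs, applyHom h ρ.rhs,
    ρ.conds.map (fun c => (applyHom h c.1, applyHom h c.2))⟩

/-- The image of an eCTRS under a tree homomorphism. -/
def homSys {α : Type u} (h : α → Term α) (R : Set (ERule α)) : Set (ERule α) :=
  homRule h '' R

/-- `h` determines a tree homomorphism from `T(G₁,V)` to `T(G₂,V)` (w.r.t. arity `ar`):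
for `f ∈ G₁` of arity `n`, `h f` is a term over `G₂` with variables among `x₁, …, x_n`. -/
def TreeHom {α : Type u} (ar : α → ℕ) (G₁ G₂ : Set α) (h : α → Term α) : Prop :=
  ∀ f ∈ G₁, (h f).overSig G₂ ∧ ∀ x ∈ (h f).varList, x < ar f

/-- `F`-identical tree homomorphism. -/
def FIdentical {α : Type u} (ar : α → ℕ) (F : Set α) (h : α → Term α) : Prop :=
  ∀ f ∈ F, h f = Term.app f ((List.range (ar f)).map Term.var)

/-- Non-erasing tree homomorphism (on the signature `G`). -/
def HomNonErasing {α : Type u} (ar : α → ℕ) (G : Set α) (h : α → Term α) : Prop :=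
  ∀ f ∈ G, (h f).varFinset = Finset.range (ar f)

/-- The homomorphism is EV-preserving for the eTRS `S`. -/
def EVPreserving {α : Type u} (h : α → Term α) (S : Set (ERule α)) : Prop :=
  ∀ ρ ∈ S, (homRule h ρ).extraVars = ρ.extraVars

/-! ## Unravelings for join and normal CTRSs, and `Norm` -/

/-- Marchiori-style unraveling `U_J` of a join conditional rule. -/
def unravelJ {α : Type u} (uj : ERule α → α) (ρ : ERule α) : List (ERule α) :=
  if ρ.conds.isEmpty then [ρ]
  else
    [ ⟨ρ.lhs,
        Term.app (uj ρ) ((ρ.conds.foldr (fun c acc => c.1 :: c.2 :: acc) []) ++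
          (seqOf ρ.lhs.varFinset).map Term.var), []⟩,
      ⟨Term.app (uj ρ)
          (((List.range ρ.conds.length).foldr
              (fun j acc => Term.var (ρ.freshBase + j) :: Term.var (ρ.freshBase + j) :: acc) []) ++
            (seqOf ρ.lhs.varFinset).map Term.var),
        ρ.rhs, []⟩ ]

def UJSys {α : Type u} (uj : ERule α → α) (R : Set (ERule α)) : Set (ERule α) :=
  { q | ∃ ρ ∈ R, q ∈ unravelJ uj ρ }

/-- Unraveling `U_N` of a normal conditional rule. -/
def unravelN {α : Type u} (un : ERule α → α) (ρ : ERule α) : List (ERule α) :=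
  if ρ.conds.isEmpty then [ρ]
  else
    [ ⟨ρ.lhs,
        Term.app (un ρ) (ρ.conds.map Prod.fst ++ (seqOf ρ.lhs.varFinset).map Term.var), []⟩,
      ⟨Term.app (un ρ) (ρ.conds.map Prod.snd ++ (seqOf ρ.lhs.varFinset).map Term.var),
        ρ.rhs, []⟩ ]

def UNSys {α : Type u} (un : ERule α → α) (R : Set (ERule α)) : Set (ERule α) :=
  { q | ∃ ρ ∈ R, q ∈ unravelN un ρ }

/-- `Norm` on rules: `l → r ⇐ eq(s₁,t₁) ↠ eq(⊤,⊤); …; eq(s_k,t_k) ↠ eq(⊤,⊤)`. -/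
def normRule {α : Type u} (eqS topS : α) (ρ : ERule α) : ERule α :=
  ⟨ρ.lhs, ρ.rhs,
    ρ.conds.map (fun c =>
      (Term.app eqS [c.1, c.2], Term.app eqS [Term.app topS [], Term.app topS []]))⟩

/-- `Norm(R) = {eq(x,x) → eq(⊤,⊤)} ∪ {Norm(ρ) | ρ ∈ R}`. -/
def NormSys {α : Type u} (eqS topS : α) (R : Set (ERule α)) : Set (ERule α) :=
  insert
    ⟨Term.app eqS [Term.var 0, Term.var 0],
      Term.app eqS [Term.app topS [], Term.app topS []], []⟩
    (normRule eqS topS '' R)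

/-- A normal CTRS: a deterministic, non-LV CTRS all of whose condition right-hand
sides are ground normal forms w.r.t. `R_u`. -/
def NormalCTRS {α : Type u} (R : Set (ERule α)) : Prop :=
  ∀ ρ ∈ R, ρ.Det ∧ ρ.nonLV ∧ ∀ c ∈ ρ.conds, c.2.Ground ∧ IsNF (Ru R) c.2


/-! ## Auxiliary lemmas for the soundness proof -/

section USound

variable {α : Type u}

theorem US_mem_foldr_append {β γ : Type*} (g : β → List γ) (L : List β) (x : γ) :
    x ∈ L.foldr (fun t acc => g t ++ acc) [] ↔ ∃ t ∈ L, x ∈ g t := by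
  induction L with
  | nil => simp
  | cons a L ih => simp [ih]

theorem US_mem_foldr_union {β : Type*} (g : β → Finset ℕ) (L : List β) (x : ℕ) :
    x ∈ (L.map g).foldr (· ∪ ·) ∅ ↔ ∃ c ∈ L, x ∈ g c := by
  induction L with
  | nil => simp
  | cons a L ih => simp [ih]

theorem Term.ind' {P : Term α → Prop} (hv : ∀ x, P (.var x))
    (ha : ∀ f ts, (∀ t ∈ ts, P t) → P (.app f ts)) : ∀ t, P t
  | .var x => hv x
  | .app f ts => ha f ts (fun t ht => Term.ind' hv ha t)
termination_by t => sizeOf t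
decreasing_by
  simp only [Term.app.sizeOf_spec]
  have := List.sizeOf_lt_of_mem ht
  omega

theorem Term.subst_app (σ : ℕ → Term α) (f : α) (ts : List (Term α)) :
    (Term.app f ts).subst σ = Term.app f (ts.map (fun t => t.subst σ)) := by
  rw [Term.subst]
  congr 1
  simp [List.attach_map_val]

@[simp] theorem Term.subst_var (σ : ℕ → Term α) (x : ℕ) :
    (Term.var x).subst σ = σ x := by rw [Term.subst]

theorem Term.varList_app (f : α) (ts : List (Term α)) :
    (Term.app f ts).varList = ts.foldr (fun t acc => t.varList ++ acc) [] := by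
  rw [Term.varList]
  simp [List.foldr_attach]

@[simp] theorem Term.varList_var (x : ℕ) : (Term.var x : Term α).varList = [x] := by
  rw [Term.varList]

theorem Term.apps_app (f : α) (ts : List (Term α)) :
    (Term.app f ts).apps = (f, ts.length) :: ts.foldr (fun t acc => t.apps ++ acc) [] := by
  rw [Term.apps]
  simp [List.foldr_attach]

theorem Term.mem_varList_app {f : α} {ts : List (Term α)} {x : ℕ} :
    x ∈ (Term.app f ts).varList ↔ ∃ t ∈ ts, x ∈ t.varList := by
  rw [Term.varList_app]; exact US_mem_foldr_append _ _ _

@[simp] theorem Term.mem_varFinset {t : Term α} {x : ℕ} :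
    x ∈ t.varFinset ↔ x ∈ t.varList := List.mem_toFinset

theorem Term.subst_congr : ∀ (t : Term α) (σ σ' : ℕ → Term α),
    (∀ x ∈ t.varList, σ x = σ' x) → t.subst σ = t.subst σ' := by
  intro t
  induction t using Term.ind' with
  | hv x => intro σ σ' h; simp [h x (by simp)]
  | ha f ts ih =>
    intro σ σ' h
    rw [Term.subst_app, Term.subst_app]
    congr 1
    exact List.map_congr_left fun t ht => ih t ht σ σ'
      (fun x hx => h x (Term.mem_varList_app.mpr ⟨t, ht, hx⟩))

theorem Term.subst_id : ∀ t : Term α, t.subst Term.var = t := by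
  intro t
  induction t using Term.ind' with
  | hv x => simp
  | ha f ts ih =>
    rw [Term.subst_app]
    congr 1
    calc ts.map (fun t => t.subst Term.var) = ts.map id := List.map_congr_left fun t ht => ih t ht
    _ = ts := List.map_id ts

theorem Term.overSig_app {F : Set α} {f : α} {ts : List (Term α)} :
    (Term.app f ts).overSig F ↔ f ∈ F ∧ ∀ t ∈ ts, t.overSig F := by
  constructor
  · intro h
    refine ⟨h (f, ts.length) (by rw [Term.apps_app]; simp), ?_⟩
    intro t ht p hp
    have hmem : p ∈ ts.foldr (fun t acc => t.apps ++ acc) [] :=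
      (US_mem_foldr_append _ _ _).mpr ⟨t, ht, hp⟩
    exact h p (by rw [Term.apps_app]; exact List.mem_cons_of_mem _ hmem)
  · rintro ⟨hf, h⟩ p hp
    rw [Term.apps_app] at hp
    rcases List.mem_cons.mp hp with rfl | hp
    · exact hf
    · obtain ⟨t, ht, hp⟩ := (US_mem_foldr_append _ _ _).mp hp
      exact h t ht p hp

theorem US_varList_mapVar (xs : List ℕ) :
    (xs.map (Term.var : ℕ → Term α)).foldr (fun t acc => t.varList ++ acc) [] = xs := by
  induction xs with
  | nil => simp
  | cons a xs ih => simp [ih]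

theorem Term.varList_mkU (f : α) (t : Term α) (xs : List ℕ) :
    (mkU f t xs).varList = t.varList ++ xs := by
  rw [mkU, Term.varList_app]
  rw [List.foldr_cons, US_varList_mapVar]

theorem Term.subst_mkU (σ : ℕ → Term α) (f : α) (t : Term α) (xs : List ℕ) :
    (mkU f t xs).subst σ = Term.app f (t.subst σ :: xs.map σ) := by
  rw [mkU, Term.subst_app]
  simp [List.map_map, Function.comp_def]

theorem Term.varFinset_mkU (f : α) (t : Term α) (xs : List ℕ) :
    (mkU f t xs).varFinset = t.varFinset ∪ xs.toFinset := by
  ext x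
  simp [Term.varFinset, Term.varList_mkU]

end USound

section USound2

variable {α : Type u}

def Ctx.comp : Ctx α → Ctx α → Ctx α
  | .hole, D => D
  | .app f pre c post, D => .app f pre (c.comp D) post

theorem Ctx.plug_comp (C D : Ctx α) (t : Term α) :
    (C.comp D).plug t = C.plug (D.plug t) := by
  induction C with
  | hole => rfl
  | app f pre c post ih => simp [Ctx.comp, Ctx.plug, ih]

theorem RedN_succ {S : Set (ERule α)} {n : ℕ} {a b : Term α} (h : RedN S n a b) :
    RedN S (n+1) a b := Or.inl h

theorem RedN_mono {S : Set (ERule α)} {n m : ℕ} (hnm : n ≤ m) {a b : Term α}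
    (h : RedN S n a b) : RedN S m a b := by
  induction hnm with
  | refl => exact h
  | step _ ih => exact Or.inl ih

theorem RedN_plug {S : Set (ERule α)} (C : Ctx α) :
    ∀ {n : ℕ} {a b : Term α}, RedN S n a b → RedN S n (C.plug a) (C.plug b) := by
  intro n
  induction n with
  | zero => intro a b h; exact h.elim
  | succ n ih =>
    rintro a b (h | ⟨ρ, hρ, C₀, σ, ha, hb, hc⟩)
    · exact Or.inl (ih h)
    · exact Or.inr ⟨ρ, hρ, C.comp C₀, σ, by rw [ha, Ctx.plug_comp],
        by rw [hb, Ctx.plug_comp], hc⟩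

theorem Red_plug {S : Set (ERule α)} (C : Ctx α) {a b : Term α} (h : Red S a b) :
    Red S (C.plug a) (C.plug b) := by
  obtain ⟨n, h⟩ := h
  exact ⟨n, RedN_plug C h⟩

theorem RedStar_plug {S : Set (ERule α)} (C : Ctx α) {a b : Term α} (h : RedStar S a b) :
    RedStar S (C.plug a) (C.plug b) :=
  Relation.ReflTransGen.lift C.plug (fun _ _ h => Red_plug C h) _ _ h

theorem RedStar_app_aux {S : Set (ERule α)} (f : α) :
    ∀ {vs ws : List (Term α)}, List.Forall₂ (RedStar S) vs ws →
      ∀ pre : List (Term α), RedStar S (.app f (pre ++ vs)) (.app f (pre ++ ws)) := by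
  intro vs ws h
  induction h with
  | nil => intro pre; exact Relation.ReflTransGen.refl
  | @cons a b l₁ l₂ hab _ ih =>
    intro pre
    have h1 : RedStar S (.app f (pre ++ a :: l₁)) (.app f (pre ++ b :: l₁)) :=
      RedStar_plug (Ctx.app f pre Ctx.hole l₁) hab
    have h2 := ih (pre ++ [b])
    simp only [List.append_assoc, List.singleton_append] at h2
    exact h1.trans h2

theorem RedStar_app {S : Set (ERule α)} (f : α) {vs ws : List (Term α)}
    (h : List.Forall₂ (RedStar S) vs ws) :
    RedStar S (.app f vs) (.app f ws) := by
  have := RedStar_app_aux f h []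
  simpa using this

theorem US_forall₂_of_getD {β : Type*} {Rr : β → β → Prop} (d : β) :
    ∀ {vs ws : List β}, vs.length = ws.length →
      (∀ i, i < vs.length → Rr (vs.getD i d) (ws.getD i d)) → List.Forall₂ Rr vs ws := by
  intro vs
  induction vs with
  | nil =>
    intro ws hlen _
    cases ws with
    | nil => exact List.Forall₂.nil
    | cons w ws => simp at hlen
  | cons v vs ih =>
    intro ws hlen h
    cases ws with
    | nil => simp at hlen
    | cons w ws =>
      refine List.Forall₂.cons (h 0 (by simp)) (ih (by simpa using hlen) ?_)
      intro i hi
      exact h (i+1) (by simpa using Nat.succ_lt_succ hi)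

theorem RedStar_exists_level {S : Set (ERule α)} {a b : Term α} (h : RedStar S a b) :
    ∃ n, Relation.ReflTransGen (RedN S n) a b := by
  induction h with
  | refl => exact ⟨0, Relation.ReflTransGen.refl⟩
  | tail _ hstep ih =>
    obtain ⟨n₁, h₁⟩ := ih
    obtain ⟨n₂, h₂⟩ := hstep
    exact ⟨max n₁ n₂, (Relation.ReflTransGen.mono (fun _ _ h => RedN_mono (le_max_left _ _) h) _ _ h₁).tail
      (RedN_mono (le_max_right _ _) h₂)⟩

theorem US_conds_bound {S : Set (ERule α)} (L : List (Term α × Term α))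
    (f g : Term α × Term α → Term α)
    (h : ∀ c ∈ L, RedStar S (f c) (g c)) :
    ∃ n, ∀ c ∈ L, Relation.ReflTransGen (RedN S n) (f c) (g c) := by
  induction L with
  | nil => exact ⟨0, by simp⟩
  | cons a L ih =>
    obtain ⟨n₁, h₁⟩ := RedStar_exists_level (h a List.mem_cons_self)
    obtain ⟨n₂, h₂⟩ := ih (fun c hc => h c (List.mem_cons_of_mem _ hc))
    refine ⟨max n₁ n₂, ?_⟩
    intro c hc
    rcases List.mem_cons.mp hc with rfl | hc
    · exact Relation.ReflTransGen.mono (fun _ _ h => RedN_mono (le_max_left _ _) h) _ _ h₁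
    · exact Relation.ReflTransGen.mono (fun _ _ h => RedN_mono (le_max_right _ _) h) _ _ (h₂ c hc)

theorem Red_of_rule {S : Set (ERule α)} {q : ERule α} (hq : q ∈ S) (σ : ℕ → Term α)
    (h : ∀ c ∈ q.conds, RedStar S (c.1.subst σ) (c.2.subst σ)) :
    Red S (q.lhs.subst σ) (q.rhs.subst σ) := by
  obtain ⟨n, hn⟩ := US_conds_bound q.conds (fun c => c.1.subst σ) (fun c => c.2.subst σ) h
  exact ⟨n+1, Or.inr ⟨q, hq, Ctx.hole, σ, rfl, rfl, hn⟩⟩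

theorem US_rtg_flip {β : Type*} {r r' : β → β → Prop} (h : ∀ x y, r x y → r' y x)
    {a b : β} (hab : Relation.ReflTransGen r a b) : Relation.ReflTransGen r' b a := by
  induction hab with
  | refl => exact Relation.ReflTransGen.refl
  | tail _ hstep ih => exact Relation.ReflTransGen.head (h _ _ hstep) ih

theorem ERule.inv_inv (ρ : ERule α) : ρ.inv.inv = ρ := by
  cases ρ with
  | mk l r cs =>
    simp only [ERule.inv, List.map_reverse, List.reverse_reverse, List.map_map]
    congr 1
    simp [Function.comp_def]

theorem RedN_inv {R : Set (ERule α)} :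
    ∀ {n : ℕ} {a b : Term α}, RedN R n a b → RedN (ERule.inv '' R) n b a := by
  intro n
  induction n with
  | zero => intro a b h; exact h.elim
  | succ n ih =>
    rintro a b (h | ⟨ρ, hρ, C, σ, ha, hb, hc⟩)
    · exact Or.inl (ih h)
    · refine Or.inr ⟨ρ.inv, ⟨ρ, hρ, rfl⟩, C, σ, hb, ha, ?_⟩
      intro c hc'
      simp only [ERule.inv, List.mem_reverse, List.mem_map] at hc'
      obtain ⟨c₀, hc₀, rfl⟩ := hc'
      exact US_rtg_flip (fun x y h => ih h) (hc c₀ hc₀)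

theorem US_invSys_invSys (R : Set (ERule α)) : ERule.inv '' (ERule.inv '' R) = R := by
  rw [Set.image_image]
  simp [ERule.inv_inv]

theorem RedStar_inv {R : Set (ERule α)} {a b : Term α}
    (h : RedStar (ERule.inv '' R) a b) : RedStar R b a := by
  refine US_rtg_flip ?_ h
  rintro x y ⟨n, hn⟩
  have := RedN_inv hn
  rw [US_invSys_invSys] at this
  exact ⟨n, this⟩

end USound2

section USound3

variable {α : Type u}

theorem US_getD_middle {β : Type*} (pre post : List β) (x d : β) :
    (pre ++ x :: post).getD pre.length d = x := by
  rw [List.getD_eq_getElem?_getD, List.getElem?_append_right (le_refl _)]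
  simp

theorem US_getD_left {β : Type*} (pre post : List β) (x d : β) {i : ℕ}
    (h : i < pre.length) :
    (pre ++ x :: post).getD i d = pre.getD i d := by
  rw [List.getD_eq_getElem?_getD, List.getElem?_append_left h, List.getD_eq_getElem?_getD]

theorem US_getD_right {β : Type*} (pre post : List β) (x d : β) {i : ℕ}
    (h : pre.length < i) :
    (pre ++ x :: post).getD i d = post.getD (i - pre.length - 1) d := by
  rw [List.getD_eq_getElem?_getD, List.getElem?_append_right (le_of_lt h)]
  rw [List.getD_eq_getElem?_getD]
  have h2 : i - pre.length = (i - pre.length - 1) + 1 := by omega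
  conv_lhs => rw [h2]
  rw [List.getElem?_cons_succ]

theorem US_getD_ne {β : Type*} (pre post : List β) (x y d : β) {i : ℕ}
    (h : i ≠ pre.length) :
    (pre ++ x :: post).getD i d = (pre ++ y :: post).getD i d := by
  rcases Nat.lt_or_ge i pre.length with h' | h'
  · rw [US_getD_left _ _ _ _ h', US_getD_left _ _ _ _ h']
  · have h'' : pre.length < i := lt_of_le_of_ne h' (Ne.symm h)
    rw [US_getD_right _ _ _ _ h'', US_getD_right _ _ _ _ h'']

theorem US_getD_map {β γ : Type*} (f : β → γ) (l : List β) (d : β) (d' : γ) {i : ℕ}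
    (h : i < l.length) :
    (l.map f).getD i d' = f (l.getD i d) := by
  rw [List.getD_eq_getElem _ _ (by simpa using h), List.getD_eq_getElem _ _ h]
  simp

theorem US_getD_mem {β : Type*} {l : List β} {i : ℕ} (h : i < l.length) (d : β) :
    l.getD i d ∈ l := by
  rw [List.getD_eq_getElem _ _ h]
  exact List.getElem_mem _

/-! ### The rules of the optimized unraveling -/

/-- The `j`-th rule of `unravelWith`. -/
def URule (carry : ℕ → List ℕ) (u : ℕ → α) (ρ : ERule α) (j : ℕ) : ERule α :=
  ⟨ if j = 0 then ρ.lhs else mkU (u (j-1)) (ρ.conds.getD (j-1) junkPair).2 (carry (j-1)),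
    if j < ρ.conds.length then mkU (u j) (ρ.conds.getD j junkPair).1 (carry j) else ρ.rhs,
    [] ⟩

theorem US_mem_unravelOpt {u : ℕ → α} {ρ : ERule α} {j : ℕ} (hj : j ≤ ρ.conds.length) :
    URule (fun i => seqOf (ρ.Zset i)) u ρ j ∈ unravelOpt u ρ := by
  unfold unravelOpt unravelWith URule
  exact List.mem_map.mpr ⟨j, List.mem_range.mpr (by omega), rfl⟩

theorem US_unravelOpt_decomp {u : ℕ → α} {ρ : ERule α} {q : ERule α}
    (h : q ∈ unravelOpt u ρ) :
    ∃ j ≤ ρ.conds.length, q = URule (fun i => seqOf (ρ.Zset i)) u ρ j := by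
  unfold unravelOpt unravelWith at h
  obtain ⟨j, hj, rfl⟩ := List.mem_map.mp h
  have hj' : j < ρ.conds.length + 1 := List.mem_range.mp hj
  exact ⟨j, by omega, rfl⟩

/-! ### X, Y, Z set lemmas -/

theorem US_mem_Yset_rhs {ρ : ERule α} {i x : ℕ} (h : x ∈ ρ.rhs.varFinset) :
    x ∈ ρ.Yset i :=
  Finset.mem_union_left _ (Finset.mem_union_left _ h)

theorem US_mem_Yset_T {ρ : ERule α} {i x : ℕ}
    (h : x ∈ (ρ.conds.getD i junkPair).2.varFinset) : x ∈ ρ.Yset i :=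
  Finset.mem_union_left _ (Finset.mem_union_right _ h)

theorem US_mem_Yset_late {ρ : ERule α} {i j x : ℕ} (hij : i < j) (hj : j < ρ.conds.length)
    (h : x ∈ (ρ.conds.getD j junkPair).1.varFinset ∪ (ρ.conds.getD j junkPair).2.varFinset) :
    x ∈ ρ.Yset i := by
  refine Finset.mem_union_right _ ?_
  rw [US_mem_foldr_union]
  refine ⟨ρ.conds.getD j junkPair, ?_, h⟩
  have hlen : j - (i+1) < (ρ.conds.drop (i+1)).length := by
    rw [List.length_drop]; omega
  have : (ρ.conds.drop (i+1)).getD (j - (i+1)) junkPair = ρ.conds.getD j junkPair := by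
    rw [List.getD_eq_getElem _ _ hlen, List.getElem_drop,
      List.getD_eq_getElem _ _ (by omega)]
    congr 1
    omega
  rw [← this]
  exact US_getD_mem hlen _
end USound3

section USound4

variable {α : Type u} {F : Set α} {R : Set (ERule α)} {u : ERule α → ℕ → α}

@[simp] theorem US_seqOf_toFinset (s : Finset ℕ) : (seqOf s).toFinset = s :=
  Finset.sort_toFinset _ _

@[simp] theorem US_mem_seqOf {s : Finset ℕ} {x : ℕ} : x ∈ seqOf s ↔ x ∈ s :=
  Finset.mem_sort _

theorem US_RL_mid (hRL : ∀ ρ ∈ R, ∀ q ∈ unravelOpt (u ρ) ρ, q.RL)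
    {ρ : ERule α} (hρ : ρ ∈ R) {i : ℕ} (hi : i < ρ.conds.length) :
    (ρ.conds.getD i junkPair).1.varList.Nodup ∧
      ∀ x ∈ (ρ.conds.getD i junkPair).1.varList, x ∉ ρ.Zset i := by
  have h := hRL ρ hρ _ (US_mem_unravelOpt (u := u ρ) (j := i) (le_of_lt hi))
  unfold ERule.RL URule at h
  rw [if_pos hi] at h
  unfold Term.Linear at h
  rw [Term.varList_mkU] at h
  rw [List.nodup_append] at h
  refine ⟨h.1, fun x hx hxz => ?_⟩
  exact h.2.2 x hx x (US_mem_seqOf.mpr hxz) rfl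

theorem US_RL_rhs (hRL : ∀ ρ ∈ R, ∀ q ∈ unravelOpt (u ρ) ρ, q.RL)
    {ρ : ERule α} (hρ : ρ ∈ R) : ρ.rhs.Linear := by
  have h := hRL ρ hρ _ (US_mem_unravelOpt (u := u ρ) (j := ρ.conds.length) (le_refl _))
  unfold ERule.RL URule at h
  rw [if_neg (lt_irrefl _)] at h
  exact h

theorem US_NE_0 (hNE : ∀ ρ ∈ R, ∀ q ∈ unravelOpt (u ρ) ρ, q.NE)
    {ρ : ERule α} (hρ : ρ ∈ R) (hk : 0 < ρ.conds.length) :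
    ρ.lhs.varFinset ⊆ (ρ.conds.getD 0 junkPair).1.varFinset ∪ ρ.Zset 0 := by
  have h := hNE ρ hρ _ (US_mem_unravelOpt (u := u ρ) (j := 0) (by omega))
  unfold ERule.NE URule at h
  rw [if_pos rfl, if_pos hk, Term.varFinset_mkU, US_seqOf_toFinset] at h
  exact h

theorem US_NE_mid (hNE : ∀ ρ ∈ R, ∀ q ∈ unravelOpt (u ρ) ρ, q.NE)
    {ρ : ERule α} (hρ : ρ ∈ R) {i : ℕ} (hi : 0 < i) (hik : i < ρ.conds.length) :
    (ρ.conds.getD (i-1) junkPair).2.varFinset ∪ ρ.Zset (i-1) ⊆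
      (ρ.conds.getD i junkPair).1.varFinset ∪ ρ.Zset i := by
  have h := hNE ρ hρ _ (US_mem_unravelOpt (u := u ρ) (j := i) (le_of_lt hik))
  unfold ERule.NE URule at h
  rw [if_neg (by omega), if_pos hik, Term.varFinset_mkU, Term.varFinset_mkU,
    US_seqOf_toFinset, US_seqOf_toFinset] at h
  exact h

theorem US_NE_k (hNE : ∀ ρ ∈ R, ∀ q ∈ unravelOpt (u ρ) ρ, q.NE)
    {ρ : ERule α} (hρ : ρ ∈ R) (hk : 0 < ρ.conds.length) :
    (ρ.conds.getD (ρ.conds.length - 1) junkPair).2.varFinset ∪ ρ.Zset (ρ.conds.length - 1)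
      ⊆ ρ.rhs.varFinset := by
  have h := hNE ρ hρ _ (US_mem_unravelOpt (u := u ρ) (j := ρ.conds.length) (le_refl _))
  unfold ERule.NE URule at h
  rw [if_neg (by omega), if_neg (lt_irrefl _), Term.varFinset_mkU, US_seqOf_toFinset] at h
  exact h

theorem US_NE_u (hNE : ∀ ρ ∈ R, ∀ q ∈ unravelOpt (u ρ) ρ, q.NE)
    {ρ : ERule α} (hρ : ρ ∈ R) (hk : ρ.conds.length = 0) :
    ρ.lhs.varFinset ⊆ ρ.rhs.varFinset := by
  have h := hNE ρ hρ _ (US_mem_unravelOpt (u := u ρ) (j := 0) (by omega))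
  unfold ERule.NE URule at h
  rw [if_pos rfl, if_neg (by omega)] at h
  exact h

/-- Key fact: variables of `sᵢ` do not occur in `Yᵢ` (by determinism + ultra-RL). -/
theorem US_Scond_not_Yset (hdet : ∀ ρ ∈ R, ρ.Det)
    (hRL : ∀ ρ ∈ R, ∀ q ∈ unravelOpt (u ρ) ρ, q.RL)
    {ρ : ERule α} (hρ : ρ ∈ R) {i : ℕ} (hi : i < ρ.conds.length) {x : ℕ}
    (hx : x ∈ (ρ.conds.getD i junkPair).1.varList) : x ∉ ρ.Yset i := by
  intro hy
  have hX : x ∈ ρ.Xset i := hdet ρ hρ i hi (Term.mem_varFinset.mpr hx)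
  have hZ : x ∈ ρ.Zset i := Finset.mem_inter.mpr ⟨hX, hy⟩
  exact (US_RL_mid hRL hρ hi).2 x hx hZ

theorem US_cond_mem {ρ : ERule α} {i : ℕ} (hi : i < ρ.conds.length) :
    ρ.conds.getD i junkPair ∈ ρ.conds :=
  US_getD_mem hi _

theorem US_overSig_Scond (hsig : ∀ ρ ∈ R, ρ.overSig F)
    {ρ : ERule α} (hρ : ρ ∈ R) {i : ℕ} (hi : i < ρ.conds.length) :
    (ρ.conds.getD i junkPair).1.overSig F :=
  ((hsig ρ hρ).2.2 _ (US_cond_mem hi)).1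

theorem US_overSig_Tcond (hsig : ∀ ρ ∈ R, ρ.overSig F)
    {ρ : ERule α} (hρ : ρ ∈ R) {i : ℕ} (hi : i < ρ.conds.length) :
    (ρ.conds.getD i junkPair).2.overSig F :=
  ((hsig ρ hρ).2.2 _ (US_cond_mem hi)).2

end USound4

section USound5

variable {α : Type u}

/-- The "lagging back-translation" relation: `Bv F R u M v` means the pure term `v`
can still catch up (via `→*_{R⁻¹}`) with (a back-translation of) the mixed term `M`. -/
inductive Bv (F : Set α) (R : Set (ERule α)) (u : ERule α → ℕ → α) :
    Term α → Term α → Prop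
  | var (x : ℕ) : Bv F R u (.var x) (.var x)
  | app (f : α) (Ms vs : List (Term α)) :
      f ∈ F → Ms.length = vs.length →
      (∀ i, i < Ms.length → Bv F R u (Ms.getD i (.var 0)) (vs.getD i (.var 0))) →
      Bv F R u (.app f Ms) (.app f vs)
  | lag (M v v' : Term α) :
      Red (ERule.inv '' R) v v' → Bv F R u M v' → Bv F R u M v
  | usym (ρ : ERule α) (σ : ℕ → Term α) (i : ℕ) (M₀ v₀ : Term α) (Ms : List (Term α)) :
      ρ ∈ R → i < ρ.conds.length →
      (∀ j, i < j → j < ρ.conds.length →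
        RedStar (ERule.inv '' R) ((ρ.conds.getD j junkPair).2.subst σ)
          ((ρ.conds.getD j junkPair).1.subst σ)) →
      Bv F R u M₀ v₀ →
      RedStar (ERule.inv '' R) ((ρ.conds.getD i junkPair).2.subst σ) v₀ →
      Ms.length = (seqOf (ρ.Zset i)).length →
      (∀ m, m < Ms.length →
        Bv F R u (Ms.getD m (.var 0)) (σ ((seqOf (ρ.Zset i)).getD m 0))) →
      Bv F R u (.app (u ρ i) (M₀ :: Ms)) (ρ.rhs.subst σ)

variable {F : Set α} {R : Set (ERule α)} {u : ERule α → ℕ → α}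

theorem Bv.lagStar {M v v' : Term α} (h : RedStar (ERule.inv '' R) v v')
    (hb : Bv F R u M v') : Bv F R u M v := by
  induction h using Relation.ReflTransGen.head_induction_on with
  | refl => exact hb
  | head hstep _ ih => exact Bv.lag _ _ _ hstep ih

end USound5

section USound6

variable {α : Type u} {F : Set α} {R : Set (ERule α)} {u : ERule α → ℕ → α}

theorem Bv_app_invF {g : α} (hg : ∀ ρ ∈ R, ∀ i, i < ρ.conds.length → g ≠ u ρ i) :
    ∀ {M v : Term α}, Bv F R u M v → ∀ {Ms : List (Term α)}, M = .app g Ms →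
      ∃ vs, RedStar (ERule.inv '' R) v (.app g vs) ∧ Ms.length = vs.length ∧
        ∀ i, i < Ms.length → Bv F R u (Ms.getD i (.var 0)) (vs.getD i (.var 0)) := by
  intro M v h
  induction h with
  | var x => intro Ms hM; exact absurd hM (by simp)
  | app f Ms' vs hf hlen hpt =>
    intro Ms hM
    obtain ⟨rfl, rfl⟩ : f = g ∧ Ms' = Ms := by
      constructor <;> injection hM
    exact ⟨vs, Relation.ReflTransGen.refl, hlen, hpt⟩
  | lag M v v' hstep _ ih =>
    intro Ms hM
    obtain ⟨vs, hv, hlen, hpt⟩ := ih hM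
    exact ⟨vs, Relation.ReflTransGen.head hstep hv, hlen, hpt⟩
  | usym ρ σ i M₀ v₀ Ms' hρ hi _ _ _ _ _ =>
    intro Ms hM
    have : u ρ i = g := by injection hM
    exact absurd this.symm (hg ρ hρ i hi)

theorem Bv_usym_inv (hfresh : UFresh F u R) {ρ : ERule α} (hρ : ρ ∈ R) {i : ℕ}
    (hi : i < ρ.conds.length) :
    ∀ {M v : Term α}, Bv F R u M v → ∀ {Ls : List (Term α)}, M = .app (u ρ i) Ls →
      ∃ (σ : ℕ → Term α) (M₀ v₀ : Term α) (Ms : List (Term α)),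
        Ls = M₀ :: Ms ∧
        RedStar (ERule.inv '' R) v (ρ.rhs.subst σ) ∧
        (∀ j, i < j → j < ρ.conds.length →
          RedStar (ERule.inv '' R) ((ρ.conds.getD j junkPair).2.subst σ)
            ((ρ.conds.getD j junkPair).1.subst σ)) ∧
        Bv F R u M₀ v₀ ∧
        RedStar (ERule.inv '' R) ((ρ.conds.getD i junkPair).2.subst σ) v₀ ∧
        Ms.length = (seqOf (ρ.Zset i)).length ∧
        (∀ m, m < Ms.length →
          Bv F R u (Ms.getD m (.var 0)) (σ ((seqOf (ρ.Zset i)).getD m 0))) := by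
  intro M v h
  induction h with
  | var x => intro Ls hM; exact absurd hM (by simp)
  | app f Ms' vs hf _ _ =>
    intro Ls hM
    have : f = u ρ i := by injection hM
    exact absurd (this ▸ hf) (hfresh.1 ρ hρ i hi)
  | lag M v v' hstep _ ih =>
    intro Ls hM
    obtain ⟨σ, M₀, v₀, Ms, h1, h2, h3, h4, h5, h6, h7⟩ := ih hM
    exact ⟨σ, M₀, v₀, Ms, h1, Relation.ReflTransGen.head hstep h2, h3, h4, h5, h6, h7⟩
  | usym ρ' σ i' M₀ v₀ Ms hρ' hi' hconds hM₀ hv₀ hlen hpt =>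
    intro Ls hM
    have hu : u ρ' i' = u ρ i := by injection hM
    obtain ⟨rfl, rfl⟩ := hfresh.2 ρ' hρ' ρ hρ i' hi' i hi hu
    have hLs : Ls = M₀ :: Ms := by injection hM with _ h; exact h.symm
    exact ⟨σ, M₀, v₀, Ms, hLs, Relation.ReflTransGen.refl, hconds, hM₀, hv₀, hlen, hpt⟩

end USound6

section USound7

variable {α : Type u} {F : Set α} {R : Set (ERule α)} {u : ERule α → ℕ → α}

theorem US_sizeOf_pos (p : Term α) : 0 < sizeOf p := by
  cases p <;> simp

theorem US_sizeOf_mem {f : α} {ts : List (Term α)} {t : Term α} (ht : t ∈ ts) :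
    sizeOf t < sizeOf (Term.app f ts) := by
  have h1 := List.sizeOf_lt_of_mem ht
  have h2 : sizeOf (Term.app f ts) = 1 + sizeOf f + sizeOf ts := by simp
  omega

/-- Congruence: pointwise `Bv`-related substitutions give `Bv`-related instances. -/
theorem US_M2 : ∀ (N : ℕ) (p : Term α), sizeOf p ≤ N → p.overSig F →
    ∀ θ σv : ℕ → Term α, (∀ x ∈ p.varList, Bv F R u (θ x) (σv x)) →
    Bv F R u (p.subst θ) (p.subst σv) := by
  intro N
  induction N with
  | zero => intro p hp; exact absurd hp (by have := US_sizeOf_pos p; omega)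
  | succ N ih =>
    intro p hp hsig' θ σv hθ
    cases p with
    | var x => simpa using hθ x (by simp)
    | app f ts =>
      rw [Term.subst_app, Term.subst_app]
      have hsig'' := Term.overSig_app.mp hsig'
      refine Bv.app f _ _ hsig''.1 (by simp) ?_
      intro i hilen
      have hts : i < ts.length := by simpa using hilen
      rw [US_getD_map _ _ (Term.var 0) _ hts, US_getD_map _ _ (Term.var 0) _ hts]
      refine ih (ts.getD i (Term.var 0)) ?_ (hsig''.2 _ (US_getD_mem hts _)) θ σv ?_
      · have h1 := US_sizeOf_mem (f := f) (US_getD_mem hts (Term.var 0))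
        omega
      · intro x hx
        exact hθ x (Term.mem_varList_app.mpr ⟨_, US_getD_mem hts _, hx⟩)

theorem US_M2' (p : Term α) (hsig' : p.overSig F) {θ σv : ℕ → Term α}
    (hθ : ∀ x ∈ p.varList, Bv F R u (θ x) (σv x)) :
    Bv F R u (p.subst θ) (p.subst σv) :=
  US_M2 (sizeOf p) p (le_refl _) hsig' θ σv hθ

theorem US_Bv_refl (t : Term α) (hsig' : t.overSig F) : Bv F R u t t := by
  have := US_M2' (F := F) (R := R) (u := u) t hsig'
    (θ := Term.var) (σv := Term.var) (fun x _ => Bv.var x)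
  rwa [Term.subst_id] at this

theorem US_M3 (hfresh : UFresh F u R) :
    ∀ {M v : Term α}, Bv F R u M v → M.overSig F → RedStar (ERule.inv '' R) v M := by
  intro M v h
  induction h with
  | var x => intro _; exact Relation.ReflTransGen.refl
  | app f Ms vs hf hlen hpt ih =>
    intro hsig'
    refine RedStar_app f (US_forall₂_of_getD (Term.var 0) hlen.symm ?_)
    intro i hi
    have hi' : i < Ms.length := by omega
    exact ih i hi' ((Term.overSig_app.mp hsig').2 _ (US_getD_mem hi' _))
  | lag M v v' hstep hb ih =>
    intro hs
    exact Relation.ReflTransGen.head hstep (ih hs)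
  | usym ρ σ i M₀ v₀ Ms hρ hi _ _ _ _ _ =>
    intro hs
    exact absurd (Term.overSig_app.mp hs).1 (hfresh.1 ρ hρ i hi)

theorem US_nodup_parts {ts : List (Term α)}
    (h : (ts.foldr (fun t acc => t.varList ++ acc) []).Nodup) :
    ∀ t ∈ ts, t.varList.Nodup := by
  induction ts with
  | nil => simp
  | cons a ts ih =>
    simp only [List.foldr_cons, List.nodup_append] at h
    intro t ht
    rcases List.mem_cons.mp ht with rfl | ht
    · exact h.1
    · exact ih h.2.1 t ht

theorem US_M1_list :
    ∀ (ts : List (Term α)) (vs : List (Term α)) (θ : ℕ → Term α),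
      (∀ t ∈ ts, ∀ v' : Term α, Bv F R u (t.subst θ) v' →
        ∃ θb, RedStar (ERule.inv '' R) v' (t.subst θb) ∧
          ∀ x ∈ t.varList, Bv F R u (θ x) (θb x)) →
      (ts.foldr (fun t acc => t.varList ++ acc) []).Nodup →
      ts.length = vs.length →
      (∀ i, i < ts.length → Bv F R u ((ts.getD i (.var 0)).subst θ) (vs.getD i (.var 0))) →
      ∃ θb, List.Forall₂ (RedStar (ERule.inv '' R)) vs (ts.map (fun t => t.subst θb)) ∧
        ∀ x ∈ ts.foldr (fun t acc => t.varList ++ acc) [], Bv F R u (θ x) (θb x) := by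
  intro ts
  induction ts with
  | nil =>
    intro vs θ _ _ hlen _
    cases vs with
    | nil => exact ⟨θ, List.Forall₂.nil, by simp⟩
    | cons v vs => simp at hlen
  | cons t ts ihl =>
    intro vs θ hrec hnodup hlen hpt
    cases vs with
    | nil => simp at hlen
    | cons v vs =>
      simp only [List.foldr_cons, List.nodup_append] at hnodup
      obtain ⟨θ1, hv1, hb1⟩ := hrec t List.mem_cons_self v
        (by have := hpt 0 (by simp); simpa using this)
      obtain ⟨θ2, hv2, hb2⟩ := ihl vs θ
        (fun t' ht' => hrec t' (List.mem_cons_of_mem _ ht'))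
        hnodup.2.1 (by simpa using hlen)
        (by
          intro i hi
          have := hpt (i+1) (by simp only [List.length_cons]; omega)
          simpa using this)
      classical
      have hdisj : ∀ t' ∈ ts, ∀ x ∈ t'.varList, x ∉ t.varList := by
        intro t' ht' x hx hxin
        exact hnodup.2.2 x hxin x ((US_mem_foldr_append _ _ _).mpr ⟨t', ht', hx⟩) rfl
      refine ⟨fun x => if x ∈ t.varList then θ1 x else θ2 x, ?_, ?_⟩
      · refine List.Forall₂.cons ?_ ?_
        · have heq : t.subst (fun x => if x ∈ t.varList then θ1 x else θ2 x) = t.subst θ1 :=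
            Term.subst_congr t _ _ (fun x hx => if_pos hx)
          show RedStar (ERule.inv '' R) v
            (Term.subst (fun x => if x ∈ t.varList then θ1 x else θ2 x) t)
          rw [heq]; exact hv1
        · have heq : ts.map (fun t' => t'.subst
              (fun x => if x ∈ t.varList then θ1 x else θ2 x)) =
              ts.map (fun t' => t'.subst θ2) := by
            refine List.map_congr_left ?_
            intro t' ht'
            exact Term.subst_congr t' _ _ (fun x hx => if_neg (hdisj t' ht' x hx))
          exact heq ▸ hv2
      · intro x hx
        rcases List.mem_append.mp hx with hx | hx
        · show Bv F R u (θ x) (if x ∈ t.varList then θ1 x else θ2 x)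
          rw [if_pos hx]; exact hb1 x hx
        · obtain ⟨t', ht', hx'⟩ := (US_mem_foldr_append _ _ _).mp hx
          show Bv F R u (θ x) (if x ∈ t.varList then θ1 x else θ2 x)
          rw [if_neg (hdisj t' ht' x hx')]
          exact hb2 x hx

/-- Decomposition of `Bv` along a linear pure pattern. -/
theorem US_M1 (hfresh : UFresh F u R) :
    ∀ (N : ℕ) (p : Term α), sizeOf p ≤ N → p.overSig F → p.varList.Nodup →
    ∀ (θ : ℕ → Term α) (v : Term α), Bv F R u (p.subst θ) v →
    ∃ θb : ℕ → Term α, RedStar (ERule.inv '' R) v (p.subst θb) ∧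
      ∀ x ∈ p.varList, Bv F R u (θ x) (θb x) := by
  intro N
  induction N with
  | zero => intro p hp; exact absurd hp (by have := US_sizeOf_pos p; omega)
  | succ N ih =>
    intro p hp hsig' hnodup θ v hb
    cases p with
    | var x =>
      refine ⟨fun _ => v, by rw [Term.subst_var]; exact Relation.ReflTransGen.refl, ?_⟩
      intro y hy
      simp only [Term.varList_var, List.mem_singleton] at hy
      subst hy
      simpa using hb
    | app f ts =>
      rw [Term.subst_app] at hb
      have hfF : f ∈ F := (Term.overSig_app.mp hsig').1
      have hg : ∀ ρ ∈ R, ∀ i, i < ρ.conds.length → f ≠ u ρ i := by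
        intro ρ hρ i hik heq
        exact (hfresh.1 ρ hρ i hik) (heq ▸ hfF)
      obtain ⟨vs, hv, hlen, hpt⟩ := Bv_app_invF hg hb rfl
      rw [Term.varList_app] at hnodup
      obtain ⟨θb, hforall, hbv⟩ := US_M1_list ts vs θ
        (fun t ht v' hb' => ih t (by have := US_sizeOf_mem (f := f) ht; omega)
          ((Term.overSig_app.mp hsig').2 t ht) (US_nodup_parts hnodup t ht) θ v' hb')
        hnodup (by simpa using hlen)
        (by
          intro i hi
          have := hpt i (by simpa using hi)
          rwa [US_getD_map _ _ (Term.var 0) _ hi] at this)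
      refine ⟨θb, ?_, ?_⟩
      · rw [Term.subst_app]
        exact hv.trans (RedStar_app f hforall)
      · intro x hx
        rw [Term.varList_app] at hx
        exact hbv x hx

theorem US_M1' (hfresh : UFresh F u R) (p : Term α) (hsig' : p.overSig F)
    (hnodup : p.varList.Nodup) {θ : ℕ → Term α} {v : Term α}
    (hb : Bv F R u (p.subst θ) v) :
    ∃ θb : ℕ → Term α, RedStar (ERule.inv '' R) v (p.subst θb) ∧
      ∀ x ∈ p.varList, Bv F R u (θ x) (θb x) :=
  US_M1 hfresh (sizeOf p) p (le_refl _) hsig' hnodup θ v hb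

end USound7

section USound8

variable {α : Type u} {F : Set α} {R : Set (ERule α)} {u : ERule α → ℕ → α}

theorem US_simAux {A B : Term α}
    (tr : ∀ v' : Term α, Bv F R u A v' → Bv F R u B v') :
    ∀ {M v : Term α}, Bv F R u M v → ∀ C : Ctx α, M = C.plug A →
      Bv F R u (C.plug B) v := by
  intro M v h
  induction h with
  | var x =>
    intro C hM
    cases C with
    | hole =>
      simp only [Ctx.plug] at hM ⊢
      subst hM
      exact tr _ (Bv.var x)
    | app f pre c post => exact absurd hM (by simp [Ctx.plug])
  | app f Ms vs hf hlen hpt ih =>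
    intro C hM
    cases C with
    | hole =>
      simp only [Ctx.plug] at hM ⊢
      subst hM
      exact tr _ (Bv.app f Ms vs hf hlen hpt)
    | app g pre c post =>
      simp only [Ctx.plug] at hM ⊢
      obtain ⟨rfl, rfl⟩ : f = g ∧ Ms = pre ++ c.plug A :: post := by
        constructor <;> injection hM
      refine Bv.app f _ vs hf ?_ ?_
      · simpa using hlen
      · intro i hi
        by_cases hip : i = pre.length
        · subst hip
          rw [US_getD_middle]
          exact ih pre.length (by simp) c (US_getD_middle _ _ _ _)
        · rw [US_getD_ne pre post (c.plug B) (c.plug A) _ hip]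
          exact hpt i (by simpa using hi)
  | lag M v v' hstep _ ih =>
    intro C hM
    exact Bv.lag _ _ _ hstep (ih C hM)
  | usym ρ σ i M₀ v₀ Ms hρ hi hconds hM₀ hv₀ hlen hpt ihM₀ ihpt =>
    intro C hM
    cases C with
    | hole =>
      simp only [Ctx.plug] at hM ⊢
      subst hM
      exact tr _ (Bv.usym ρ σ i M₀ v₀ Ms hρ hi hconds hM₀ hv₀ hlen hpt)
    | app g pre c post =>
      simp only [Ctx.plug] at hM ⊢
      have hg : u ρ i = g := by injection hM
      subst hg
      have hl : M₀ :: Ms = pre ++ c.plug A :: post := by injection hM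
      cases pre with
      | nil =>
        simp only [List.nil_append] at hl ⊢
        obtain ⟨rfl, rfl⟩ : M₀ = c.plug A ∧ Ms = post := by
          constructor <;> injection hl
        exact Bv.usym ρ σ i (c.plug B) v₀ Ms hρ hi hconds (ihM₀ c rfl) hv₀ hlen hpt
      | cons m0 pre' =>
        simp only [List.cons_append] at hl ⊢
        obtain ⟨rfl, rfl⟩ : M₀ = m0 ∧ Ms = pre' ++ c.plug A :: post := by
          constructor <;> injection hl
        refine Bv.usym ρ σ i M₀ v₀ (pre' ++ c.plug B :: post) hρ hi hconds hM₀ hv₀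
          (by simpa using hlen) ?_
        intro m hm
        by_cases hmp : m = pre'.length
        · subst hmp
          rw [US_getD_middle]
          refine ihpt pre'.length (by simp) c (US_getD_middle _ _ _ _)
        · rw [US_getD_ne pre' post (c.plug B) (c.plug A) _ hmp]
          exact hpt m (by simpa using hm)

end USound8

section USound9

variable {α : Type u} {F : Set α} {R : Set (ERule α)} {u : ERule α → ℕ → α}

theorem US_URule_lhs (carry : ℕ → List ℕ) (u' : ℕ → α) (ρ : ERule α) (j : ℕ) :
    (URule carry u' ρ j).lhs =
      if j = 0 then ρ.lhs
      else mkU (u' (j-1)) (ρ.conds.getD (j-1) junkPair).2 (carry (j-1)) := rfl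

theorem US_URule_rhs (carry : ℕ → List ℕ) (u' : ℕ → α) (ρ : ERule α) (j : ℕ) :
    (URule carry u' ρ j).rhs =
      if j < ρ.conds.length then mkU (u' j) (ρ.conds.getD j junkPair).1 (carry j)
      else ρ.rhs := rfl

theorem US_carried_extract {θ σv : ℕ → Term α} {i' : ℕ} {ρ : ERule α}
    (hcar : ∀ m, m < ((seqOf (ρ.Zset i')).map θ).length →
      Bv F R u (((seqOf (ρ.Zset i')).map θ).getD m (.var 0))
        (σv ((seqOf (ρ.Zset i')).getD m 0))) :
    ∀ x ∈ ρ.Zset i', Bv F R u (θ x) (σv x) := by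
  intro x hx
  obtain ⟨m, hm, hxm⟩ := List.mem_iff_getElem.mp (US_mem_seqOf.mpr hx)
  have h := hcar m (by simpa using hm)
  rw [US_getD_map _ _ 0 _ hm, List.getD_eq_getElem _ _ hm, hxm] at h
  exact h

theorem US_carried_build {θ σv : ℕ → Term α} {i' : ℕ} {ρ : ERule α}
    (h : ∀ x ∈ ρ.Zset i', Bv F R u (θ x) (σv x)) :
    ∀ m, m < ((seqOf (ρ.Zset i')).map θ).length →
      Bv F R u (((seqOf (ρ.Zset i')).map θ).getD m (.var 0))
        (σv ((seqOf (ρ.Zset i')).getD m 0)) := by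
  intro m hm
  have hm' : m < (seqOf (ρ.Zset i')).length := by simpa using hm
  rw [US_getD_map _ _ 0 _ hm']
  exact h _ (US_mem_seqOf.mp (US_getD_mem hm' 0))

/-- The updated substitution `σ̂` after matching the pattern `sᵢ₊₁`. -/
theorem US_hat (hdet : ∀ ρ ∈ R, ρ.Det)
    (hRL : ∀ ρ ∈ R, ∀ q ∈ unravelOpt (u ρ) ρ, q.RL)
    {ρ : ERule α} (hρ : ρ ∈ R) {i : ℕ} (hi : i < ρ.conds.length)
    (θ σ θb : ℕ → Term α) (v₀ : Term α)
    (hconds : ∀ j, i < j → j < ρ.conds.length →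
      RedStar (ERule.inv '' R) ((ρ.conds.getD j junkPair).2.subst σ)
        ((ρ.conds.getD j junkPair).1.subst σ))
    (hv₀ : RedStar (ERule.inv '' R) ((ρ.conds.getD i junkPair).2.subst σ) v₀)
    (hM1v : RedStar (ERule.inv '' R) v₀ ((ρ.conds.getD i junkPair).1.subst θb))
    (hb1 : ∀ x ∈ (ρ.conds.getD i junkPair).1.varList, Bv F R u (θ x) (θb x))
    (hZb : ∀ x ∈ ρ.Zset i, Bv F R u (θ x) (σ x)) :
    ∃ σh : ℕ → Term α,
      ρ.rhs.subst σh = ρ.rhs.subst σ ∧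
      (∀ j, i ≤ j → j < ρ.conds.length →
        RedStar (ERule.inv '' R) ((ρ.conds.getD j junkPair).2.subst σh)
          ((ρ.conds.getD j junkPair).1.subst σh)) ∧
      (∀ x, x ∈ (ρ.conds.getD i junkPair).1.varFinset ∪ ρ.Zset i →
        Bv F R u (θ x) (σh x)) := by
  classical
  have hagree : ∀ p : Term α, (∀ x ∈ p.varList, x ∈ ρ.Yset i) →
      p.subst (fun x => if x ∈ (ρ.conds.getD i junkPair).1.varList then θb x else σ x) =
        p.subst σ := by
    intro p hp
    refine Term.subst_congr p _ _ ?_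
    intro x hx
    exact if_neg (fun hmem => US_Scond_not_Yset hdet hRL hρ hi hmem (hp x hx))
  refine ⟨fun x => if x ∈ (ρ.conds.getD i junkPair).1.varList then θb x else σ x,
    hagree ρ.rhs (fun x hx => US_mem_Yset_rhs (Term.mem_varFinset.mpr hx)), ?_, ?_⟩
  · intro j hij hj
    rcases eq_or_lt_of_le hij with heq | hlt
    · subst heq
      rw [hagree (ρ.conds.getD i junkPair).2
        (fun x hx => US_mem_Yset_T (Term.mem_varFinset.mpr hx))]
      have hs : (ρ.conds.getD i junkPair).1.subst
          (fun x => if x ∈ (ρ.conds.getD i junkPair).1.varList then θb x else σ x) =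
          (ρ.conds.getD i junkPair).1.subst θb :=
        Term.subst_congr _ _ _ (fun x hx => if_pos hx)
      rw [hs]
      exact hv₀.trans hM1v
    · rw [hagree (ρ.conds.getD j junkPair).2 (fun x hx =>
        US_mem_Yset_late hlt hj (Finset.mem_union_right _ (Term.mem_varFinset.mpr hx)))]
      rw [hagree (ρ.conds.getD j junkPair).1 (fun x hx =>
        US_mem_Yset_late hlt hj (Finset.mem_union_left _ (Term.mem_varFinset.mpr hx)))]
      exact hconds j hlt hj
  · intro x hx
    rcases Finset.mem_union.mp hx with hxs | hxz
    · have hxl : x ∈ (ρ.conds.getD i junkPair).1.varList := Term.mem_varFinset.mp hxs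
      show Bv F R u (θ x)
        (if x ∈ (ρ.conds.getD i junkPair).1.varList then θb x else σ x)
      rw [if_pos hxl]
      exact hb1 x hxl
    · have hxl : x ∉ (ρ.conds.getD i junkPair).1.varList :=
        fun hmem => (US_RL_mid hRL hρ hi).2 x hmem hxz
      show Bv F R u (θ x)
        (if x ∈ (ρ.conds.getD i junkPair).1.varList then θb x else σ x)
      rw [if_neg hxl]
      exact hZb x hxz

/-- Root case: unconditional rules. -/
theorem US_rootA (hsig : ∀ ρ ∈ R, ρ.overSig F)
    (hRL : ∀ ρ ∈ R, ∀ q ∈ unravelOpt (u ρ) ρ, q.RL)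
    (hNE : ∀ ρ ∈ R, ∀ q ∈ unravelOpt (u ρ) ρ, q.NE)
    (hfresh : UFresh F u R)
    {ρ : ERule α} (hρ : ρ ∈ R) (hk : ρ.conds.length = 0)
    (θ : ℕ → Term α) (v : Term α) (hb : Bv F R u (ρ.rhs.subst θ) v) :
    Bv F R u (ρ.lhs.subst θ) v := by
  obtain ⟨θb, hM1v, hb1⟩ := US_M1' hfresh ρ.rhs (hsig ρ hρ).2.1 (US_RL_rhs hRL hρ) hb
  have hcnil : ρ.conds = [] := List.length_eq_zero_iff.mp hk
  have hstep : Red (ERule.inv '' R) (ρ.rhs.subst θb) (ρ.lhs.subst θb) := by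
    have h := Red_of_rule (S := ERule.inv '' R) (q := ρ.inv) ⟨ρ, hρ, rfl⟩ θb ?_
    · exact h
    · intro c hc
      simp only [ERule.inv, hcnil, List.map_nil, List.reverse_nil, List.not_mem_nil] at hc
  refine Bv.lagStar (hM1v.tail hstep) ?_
  refine US_M2' ρ.lhs (hsig ρ hρ).1 ?_
  intro x hx
  exact hb1 x (Term.mem_varFinset.mp
    (US_NE_u hNE hρ hk (Term.mem_varFinset.mpr hx)))

/-- Root case: consumption of the last U symbol (first unraveled rule, reversed). -/
theorem US_rootB (hsig : ∀ ρ ∈ R, ρ.overSig F) (hdet : ∀ ρ ∈ R, ρ.Det)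
    (hRL : ∀ ρ ∈ R, ∀ q ∈ unravelOpt (u ρ) ρ, q.RL)
    (hNE : ∀ ρ ∈ R, ∀ q ∈ unravelOpt (u ρ) ρ, q.NE)
    (hfresh : UFresh F u R)
    {ρ : ERule α} (hρ : ρ ∈ R) (hk : 0 < ρ.conds.length)
    (θ : ℕ → Term α) (v : Term α)
    (hb : Bv F R u
      ((mkU (u ρ 0) (ρ.conds.getD 0 junkPair).1 (seqOf (ρ.Zset 0))).subst θ) v) :
    Bv F R u (ρ.lhs.subst θ) v := by
  rw [Term.subst_mkU] at hb
  obtain ⟨σ, M₀, v₀, Ms, hLs, hv, hconds, hM₀, hv₀, hlen, hcar⟩ :=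
    Bv_usym_inv hfresh hρ hk hb rfl
  obtain ⟨hM0eq, hMseq⟩ : (ρ.conds.getD 0 junkPair).1.subst θ = M₀ ∧
      (seqOf (ρ.Zset 0)).map θ = Ms := by constructor <;> injection hLs
  subst hM0eq
  subst hMseq
  obtain ⟨θb, hM1v, hb1⟩ := US_M1' hfresh _ (US_overSig_Scond hsig hρ hk)
    ((US_RL_mid hRL hρ hk).1) hM₀
  obtain ⟨σh, hrhs, hcondsh, hpoint⟩ := US_hat hdet hRL hρ hk θ σ θb v₀ hconds hv₀ hM1v hb1
    (US_carried_extract hcar)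
  have hstep : Red (ERule.inv '' R) (ρ.rhs.subst σh) (ρ.lhs.subst σh) := by
    have h := Red_of_rule (S := ERule.inv '' R) (q := ρ.inv) ⟨ρ, hρ, rfl⟩ σh ?_
    · exact h
    · intro c hc
      simp only [ERule.inv, List.mem_reverse, List.mem_map] at hc
      obtain ⟨c₀, hc₀, rfl⟩ := hc
      obtain ⟨jj, hjj, hceq⟩ := List.mem_iff_getElem.mp hc₀
      have hgd : ρ.conds.getD jj junkPair = c₀ := by
        rw [List.getD_eq_getElem _ _ hjj, hceq]
      have h2 := hcondsh jj (Nat.zero_le _) hjj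
      rw [hgd] at h2
      exact h2
  have hchain : RedStar (ERule.inv '' R) v (ρ.lhs.subst σh) := by
    rw [← hrhs] at hv
    exact hv.tail hstep
  refine Bv.lagStar hchain ?_
  refine US_M2' ρ.lhs (hsig ρ hρ).1 ?_
  intro x hx
  exact hpoint x (US_NE_0 hNE hρ hk (Term.mem_varFinset.mpr hx))

/-- Root case: middle transitions. -/
theorem US_rootC (hsig : ∀ ρ ∈ R, ρ.overSig F) (hdet : ∀ ρ ∈ R, ρ.Det)
    (hRL : ∀ ρ ∈ R, ∀ q ∈ unravelOpt (u ρ) ρ, q.RL)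
    (hNE : ∀ ρ ∈ R, ∀ q ∈ unravelOpt (u ρ) ρ, q.NE)
    (hfresh : UFresh F u R)
    {ρ : ERule α} (hρ : ρ ∈ R) {j : ℕ} (hj0 : 0 < j) (hjk : j < ρ.conds.length)
    (θ : ℕ → Term α) (v : Term α)
    (hb : Bv F R u
      ((mkU (u ρ j) (ρ.conds.getD j junkPair).1 (seqOf (ρ.Zset j))).subst θ) v) :
    Bv F R u
      ((mkU (u ρ (j-1)) (ρ.conds.getD (j-1) junkPair).2 (seqOf (ρ.Zset (j-1)))).subst θ)
      v := by
  rw [Term.subst_mkU] at hb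
  obtain ⟨σ, M₀, v₀, Ms, hLs, hv, hconds, hM₀, hv₀, hlen, hcar⟩ :=
    Bv_usym_inv hfresh hρ hjk hb rfl
  obtain ⟨hM0eq, hMseq⟩ : (ρ.conds.getD j junkPair).1.subst θ = M₀ ∧
      (seqOf (ρ.Zset j)).map θ = Ms := by constructor <;> injection hLs
  subst hM0eq
  subst hMseq
  obtain ⟨θb, hM1v, hb1⟩ := US_M1' hfresh _ (US_overSig_Scond hsig hρ hjk)
    ((US_RL_mid hRL hρ hjk).1) hM₀
  obtain ⟨σh, hrhs, hcondsh, hpoint⟩ := US_hat hdet hRL hρ hjk θ σ θb v₀ hconds hv₀ hM1v hb1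
    (US_carried_extract hcar)
  have hNE' := US_NE_mid hNE hρ hj0 hjk
  have hpoint' : ∀ x, x ∈ (ρ.conds.getD (j-1) junkPair).2.varFinset ∪ ρ.Zset (j-1) →
      Bv F R u (θ x) (σh x) := fun x hx => hpoint x (hNE' hx)
  rw [Term.subst_mkU]
  have hchain : RedStar (ERule.inv '' R) v (ρ.rhs.subst σh) := by
    rw [← hrhs] at hv
    exact hv
  refine Bv.lagStar hchain ?_
  refine Bv.usym ρ σh (j-1) ((ρ.conds.getD (j-1) junkPair).2.subst θ)
    ((ρ.conds.getD (j-1) junkPair).2.subst σh) ((seqOf (ρ.Zset (j-1))).map θ)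
    hρ (by omega) ?_ ?_ ?_ (by simp) ?_
  · intro j' h1 h2
    exact hcondsh j' (by omega) h2
  · refine US_M2' _ (US_overSig_Tcond hsig hρ (by omega)) ?_
    intro x hx
    exact hpoint' x (Finset.mem_union_left _ (Term.mem_varFinset.mpr hx))
  · exact Relation.ReflTransGen.refl
  · exact US_carried_build (fun x hx => hpoint' x (Finset.mem_union_right _ hx))

/-- Root case: creation of the first U symbol (last unraveled rule, reversed). -/
theorem US_rootD (hsig : ∀ ρ ∈ R, ρ.overSig F)
    (hRL : ∀ ρ ∈ R, ∀ q ∈ unravelOpt (u ρ) ρ, q.RL)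
    (hNE : ∀ ρ ∈ R, ∀ q ∈ unravelOpt (u ρ) ρ, q.NE)
    (hfresh : UFresh F u R)
    {ρ : ERule α} (hρ : ρ ∈ R) (hk : 0 < ρ.conds.length)
    (θ : ℕ → Term α) (v : Term α) (hb : Bv F R u (ρ.rhs.subst θ) v) :
    Bv F R u
      ((mkU (u ρ (ρ.conds.length - 1)) (ρ.conds.getD (ρ.conds.length - 1) junkPair).2
        (seqOf (ρ.Zset (ρ.conds.length - 1)))).subst θ) v := by
  obtain ⟨θb, hM1v, hb1⟩ := US_M1' hfresh ρ.rhs (hsig ρ hρ).2.1 (US_RL_rhs hRL hρ) hb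
  have hNE' := US_NE_k hNE hρ hk
  have hpoint : ∀ x, x ∈ (ρ.conds.getD (ρ.conds.length - 1) junkPair).2.varFinset ∪
      ρ.Zset (ρ.conds.length - 1) → Bv F R u (θ x) (θb x) := by
    intro x hx
    exact hb1 x (Term.mem_varFinset.mp (hNE' hx))
  rw [Term.subst_mkU]
  refine Bv.lagStar hM1v ?_
  refine Bv.usym ρ θb (ρ.conds.length - 1)
    ((ρ.conds.getD (ρ.conds.length - 1) junkPair).2.subst θ)
    ((ρ.conds.getD (ρ.conds.length - 1) junkPair).2.subst θb)
    ((seqOf (ρ.Zset (ρ.conds.length - 1))).map θ)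
    hρ (by omega) ?_ ?_ ?_ (by simp) ?_
  · intro j' h1 h2
    exact absurd h2 (by omega)
  · refine US_M2' _ (US_overSig_Tcond hsig hρ (by omega)) ?_
    intro x hx
    exact hpoint x (Finset.mem_union_left _ (Term.mem_varFinset.mpr hx))
  · exact Relation.ReflTransGen.refl
  · exact US_carried_build (fun x hx => hpoint x (Finset.mem_union_right _ hx))

/-- The root simulation lemma: any (reversed) step with an unraveled rule preserves
the back-translation invariant. -/
theorem US_root (hsig : ∀ ρ ∈ R, ρ.overSig F) (hdet : ∀ ρ ∈ R, ρ.Det)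
    (hRL : ∀ ρ ∈ R, ∀ q ∈ unravelOpt (u ρ) ρ, q.RL)
    (hNE : ∀ ρ ∈ R, ∀ q ∈ unravelOpt (u ρ) ρ, q.NE)
    (hfresh : UFresh F u R)
    {q : ERule α} (hq : q ∈ UoptSys u R) :
    ∀ (θ : ℕ → Term α) (v : Term α),
      Bv F R u (q.rhs.subst θ) v → Bv F R u (q.lhs.subst θ) v := by
  obtain ⟨ρ, hρ, hq'⟩ := hq
  obtain ⟨j, hj, rfl⟩ := US_unravelOpt_decomp hq'
  intro θ v hb
  by_cases hk0 : ρ.conds.length = 0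
  · have hj0 : j = 0 := by omega
    subst hj0
    rw [US_URule_rhs, if_neg (by omega)] at hb
    rw [US_URule_lhs, if_pos rfl]
    exact US_rootA hsig hRL hNE hfresh hρ hk0 θ v hb
  · have hk : 0 < ρ.conds.length := by omega
    by_cases hjk : j = ρ.conds.length
    · subst hjk
      rw [US_URule_rhs, if_neg (lt_irrefl _)] at hb
      rw [US_URule_lhs, if_neg (by omega)]
      exact US_rootD hsig hRL hNE hfresh hρ hk θ v hb
    · have hjk' : j < ρ.conds.length := by omega
      by_cases hj0 : j = 0
      · subst hj0
        rw [US_URule_rhs, if_pos hjk'] at hb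
        rw [US_URule_lhs, if_pos rfl]
        exact US_rootB hsig hdet hRL hNE hfresh hρ hk θ v hb
      · rw [US_URule_rhs, if_pos hjk'] at hb
        rw [US_URule_lhs, if_neg hj0]
        exact US_rootC hsig hdet hRL hNE hfresh hρ (Nat.pos_of_ne_zero hj0) hjk' θ v hb

end USound9

section USound10

variable {α : Type u} {F : Set α} {R : Set (ERule α)} {u : ERule α → ℕ → α}

theorem US_Red_uncond {S : Set (ERule α)} (hS : ∀ q ∈ S, q.conds = ([] : List (Term α × Term α)))
    {a b : Term α} (h : Red S a b) :
    ∃ q ∈ S, ∃ C : Ctx α, ∃ σ : ℕ → Term α,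
      a = C.plug (q.lhs.subst σ) ∧ b = C.plug (q.rhs.subst σ) := by
  obtain ⟨n, hn⟩ := h
  induction n with
  | zero => exact hn.elim
  | succ n ih =>
    rcases hn with h | ⟨ρ, hρ, C, σ, ha, hb, _⟩
    · exact ih h
    · exact ⟨ρ, hρ, C, σ, ha, hb⟩

theorem US_UoptSys_conds {q : ERule α} (hq : q ∈ UoptSys u R) :
    q.conds = ([] : List (Term α × Term α)) := by
  obtain ⟨ρ, hρ, hq'⟩ := hq
  obtain ⟨j, hj, rfl⟩ := US_unravelOpt_decomp hq'
  rfl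

theorem US_revStep (hsig : ∀ ρ ∈ R, ρ.overSig F) (hdet : ∀ ρ ∈ R, ρ.Det)
    (hRL : ∀ ρ ∈ R, ∀ q ∈ unravelOpt (u ρ) ρ, q.RL)
    (hNE : ∀ ρ ∈ R, ∀ q ∈ unravelOpt (u ρ) ρ, q.NE)
    (hfresh : UFresh F u R)
    {a b : Term α} (h : Red (UoptSys u R) a b) {v : Term α} (hb : Bv F R u b v) :
    Bv F R u a v := by
  obtain ⟨q, hq, C, σ, ha, hbeq⟩ := US_Red_uncond (fun q hq => US_UoptSys_conds hq) h
  subst ha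
  subst hbeq
  exact US_simAux (US_root hsig hdet hRL hNE hfresh hq σ) hb C rfl

end USound10

/-- The optimized unraveling `U_opt` is sound for every `U_opt`-RLNE
eDCTRS `R` over a signature `F` that is non-LV or non-RV: for all terms
`s, t ∈ T(F,V)`, `s →*_{U_opt(R)} t` implies `s →*_R t`. -/
theorem uopt_sound_of_ultraRLNE {α : Type u} (F : Set α) (R : Set (ERule α))
    (u : ERule α → ℕ → α)
    (hsig : ∀ ρ ∈ R, ρ.overSig F)
    (hdet : ∀ ρ ∈ R, ρ.Det)
    (hRL : ∀ ρ ∈ R, ∀ q ∈ unravelOpt (u ρ) ρ, q.RL)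
    (hNE : ∀ ρ ∈ R, ∀ q ∈ unravelOpt (u ρ) ρ, q.NE)
    (hfresh : UFresh F u R)
    (hnv : (∀ ρ ∈ R, ρ.nonLV) ∨ (∀ ρ ∈ R, ρ.nonRV)) :
    ∀ s t : Term α, s.overSig F → t.overSig F →
      RedStar (UoptSys u R) s t → RedStar R s t := by
  intro s t hs ht hred
  have hBv : Bv F R u s t := by
    clear hs
    induction hred using Relation.ReflTransGen.head_induction_on with
    | refl => exact US_Bv_refl t ht
    | head hstep _ ih => exact US_revStep hsig hdet hRL hNE hfresh hstep ih
  have hR' : RedStar (ERule.inv '' R) t s := US_M3 hfresh hBv hs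
  exact RedStar_inv hR'
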